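/- Among all bipartite graphs with n ≥ 2 vertices and m edges where 0 ≤ m ≤ n - 2, the unique graph maximizing the sum of squares of degrees is K_{1,m} ∪ S_{n-m-1}, the star with m edges together with n - m - 1 isolated vertices. -/

import Mathlib

open Finset

/-- Sum of squares of degrees. -/
noncomputable def sigma2 {V : Type*} [Fintype V] (G : SimpleGraph V) : ℕ :=
  ∑ v, ((G.neighborSet v).ncard) ^ 2

/-- `K_{1,m} ∪ S_{n-m-1}` on `Fin n`: vertex `0` joined to vertices `1, …, m`,
all other vertices isolated. -/
def starUnion (n m : ℕ) : SimpleGraph (Fin n) :=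
  SimpleGraph.fromRel (fun u v => u.val = 0 ∧ 1 ≤ v.val ∧ v.val ≤ m)

set_option linter.unusedSectionVars false

lemma card_val_filter {n : ℕ} (p : ℕ → Prop) [DecidablePred p] :
    (univ.filter fun u : Fin n => p u.val).card = ((range n).filter p).card := by
  rw [Finset.card_filter, Finset.card_filter,
    ← Fin.sum_univ_eq_sum_range (fun i => if p i then 1 else 0) n]




section Aux
variable {V : Type*} [Fintype V] [DecidableEq V] (G : SimpleGraph V) [DecidableRel G.Adj]

lemma sigma2_eq : sigma2 G = ∑ v, G.degree v ^ 2 := by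
  unfold sigma2
  refine Finset.sum_congr rfl fun v _ => ?_
  congr 1
  rw [← SimpleGraph.card_neighborFinset_eq_degree, SimpleGraph.neighborFinset_def,
    Set.ncard_eq_toFinset_card']

lemma sum_pairs (f : V → V → ℕ) :
    ∑ p ∈ univ.filter (fun p : V × V => G.Adj p.1 p.2), f p.1 p.2
      = ∑ u, ∑ v ∈ G.neighborFinset u, f u v := by
  rw [Finset.sum_filter, ← Finset.univ_product_univ, Finset.sum_product]
  refine Finset.sum_congr rfl fun u _ => ?_
  rw [← Finset.sum_filter]
  refine Finset.sum_congr ?_ fun v _ => rfl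
  ext v; simp

lemma sum_pairs_swap (f : V → V → ℕ) :
    ∑ p ∈ univ.filter (fun p : V × V => G.Adj p.1 p.2), f p.1 p.2
      = ∑ p ∈ univ.filter (fun p : V × V => G.Adj p.1 p.2), f p.2 p.1 := by
  refine Finset.sum_equiv (Equiv.prodComm V V) (fun p => ?_) (fun p _ => rfl)
  simp [SimpleGraph.adj_comm]

lemma key_sum :
    ∑ p ∈ univ.filter (fun p : V × V => G.Adj p.1 p.2), (G.degree p.1 + G.degree p.2)
      = 2 * ∑ v, G.degree v ^ 2 := by
  rw [Finset.sum_add_distrib]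
  have h1 : ∑ p ∈ univ.filter (fun p : V × V => G.Adj p.1 p.2), G.degree p.1
      = ∑ v, G.degree v ^ 2 := by
    rw [sum_pairs G (fun u _ => G.degree u)]
    refine Finset.sum_congr rfl fun u _ => ?_
    rw [Finset.sum_const, SimpleGraph.card_neighborFinset_eq_degree, smul_eq_mul, sq]
  have h2 : ∑ p ∈ univ.filter (fun p : V × V => G.Adj p.1 p.2), G.degree p.2
      = ∑ v, G.degree v ^ 2 := by
    rw [← sum_pairs_swap G (fun u _ => G.degree u), h1]
  rw [h1, h2, two_mul]

lemma card_pairs :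
    (univ.filter (fun p : V × V => G.Adj p.1 p.2)).card = 2 * G.edgeFinset.card := by
  rw [← SimpleGraph.sum_degrees_eq_twice_card_edges, Finset.card_eq_sum_ones,
    sum_pairs G (fun _ _ => 1)]
  refine Finset.sum_congr rfl fun u _ => ?_
  rw [Finset.sum_const, SimpleGraph.card_neighborFinset_eq_degree, smul_eq_mul, mul_one]

lemma incidence_inter {u v : V} (h : G.Adj u v) :
    G.incidenceFinset u ∩ G.incidenceFinset v = {s(u, v)} := by
  ext e
  have := Set.ext_iff.mp (G.incidenceSet_inter_incidenceSet_of_adj h) e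
  simp only [Finset.mem_inter, SimpleGraph.mem_incidenceFinset, Finset.mem_singleton]
  simpa using this

lemma incidence_union_subset (u v : V) :
    G.incidenceFinset u ∪ G.incidenceFinset v ⊆ G.edgeFinset := by
  intro e he
  rw [Finset.mem_union, SimpleGraph.mem_incidenceFinset, SimpleGraph.mem_incidenceFinset] at he
  rw [SimpleGraph.mem_edgeFinset]
  rcases he with he | he
  · exact he.1
  · exact he.1

lemma degree_add_degree_le {u v : V} (h : G.Adj u v) :
    G.degree u + G.degree v ≤ G.edgeFinset.card + 1 := by
  have h1 := Finset.card_union_add_card_inter (G.incidenceFinset u) (G.incidenceFinset v)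
  rw [incidence_inter G h, SimpleGraph.card_incidenceFinset_eq_degree,
    SimpleGraph.card_incidenceFinset_eq_degree, Finset.card_singleton] at h1
  have h2 : (G.incidenceFinset u ∪ G.incidenceFinset v).card ≤ G.edgeFinset.card :=
    Finset.card_le_card (incidence_union_subset G u v)
  omega

lemma two_sigma2_le :
    2 * ∑ v, G.degree v ^ 2 ≤ 2 * G.edgeFinset.card * (G.edgeFinset.card + 1) := by
  rw [← key_sum]
  calc ∑ p ∈ univ.filter (fun p : V × V => G.Adj p.1 p.2), (G.degree p.1 + G.degree p.2)
      ≤ ∑ _p ∈ univ.filter (fun p : V × V => G.Adj p.1 p.2), (G.edgeFinset.card + 1) := by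
        refine Finset.sum_le_sum fun p hp => ?_
        exact degree_add_degree_le G (by simpa using hp)
    _ = 2 * G.edgeFinset.card * (G.edgeFinset.card + 1) := by
        rw [Finset.sum_const, card_pairs, smul_eq_mul]

lemma eq_case (heq : 2 * ∑ v, G.degree v ^ 2 = 2 * G.edgeFinset.card * (G.edgeFinset.card + 1))
    {u v : V} (h : G.Adj u v) :
    G.incidenceFinset u ∪ G.incidenceFinset v = G.edgeFinset := by
  have hterm : ∀ p ∈ univ.filter (fun p : V × V => G.Adj p.1 p.2),
      G.degree p.1 + G.degree p.2 = G.edgeFinset.card + 1 := by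
    rw [← Finset.sum_eq_sum_iff_of_le
      (fun p hp => degree_add_degree_le G (by simpa using hp))]
    rw [key_sum, heq, Finset.sum_const, card_pairs, smul_eq_mul]
  have hdeg : G.degree u + G.degree v = G.edgeFinset.card + 1 := by
    have := hterm (u, v) (by simpa using h)
    simpa using this
  have h1 := Finset.card_union_add_card_inter (G.incidenceFinset u) (G.incidenceFinset v)
  rw [incidence_inter G h, SimpleGraph.card_incidenceFinset_eq_degree,
    SimpleGraph.card_incidenceFinset_eq_degree, Finset.card_singleton, hdeg] at h1
  exact Finset.eq_of_subset_of_card_le (incidence_union_subset G u v) (by omega)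

end Aux





lemma ncard_val_filter {n : ℕ} (p : ℕ → Prop) [DecidablePred p] :
    {u : Fin n | p u.val}.ncard = ((range n).filter p).card := by
  have h1 : {u : Fin n | p u.val} = ↑(univ.filter fun u : Fin n => p u.val) := by
    ext u; simp
  rw [h1, Set.ncard_coe_finset, Finset.card_filter, Finset.card_filter,
    ← Fin.sum_univ_eq_sum_range (fun i => if p i then 1 else 0) n]

lemma star_ncard {n m : ℕ} (h : m + 2 ≤ n) (v : Fin n) :
    ((starUnion n m).neighborSet v).ncard
      = (if v.val = 0 then m else if v.val ≤ m then 1 else 0) := by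
  by_cases hv : v.val = 0
  · have hv0 : v.val = 0 := hv
    have hset : (starUnion n m).neighborSet v = {u : Fin n | 1 ≤ u.val ∧ u.val ≤ m} := by
      ext u
      simp only [SimpleGraph.mem_neighborSet, starUnion, SimpleGraph.fromRel_adj,
        Set.mem_setOf_eq, ne_eq, Fin.ext_iff]
      omega
    rw [hset, ncard_val_filter (fun i => 1 ≤ i ∧ i ≤ m)]
    have : (range n).filter (fun i => 1 ≤ i ∧ i ≤ m) = Finset.Ico 1 (m + 1) := by
      ext i; simp only [Finset.mem_filter, Finset.mem_range, Finset.mem_Ico]; omega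
    rw [this, Nat.card_Ico]
    simp [hv0]
  · by_cases hvm : v.val ≤ m
    · have hset : (starUnion n m).neighborSet v = {u : Fin n | u.val = 0} := by
        ext u
        simp only [SimpleGraph.mem_neighborSet, starUnion, SimpleGraph.fromRel_adj,
          Set.mem_setOf_eq, ne_eq, Fin.ext_iff]
        omega
      rw [hset, ncard_val_filter (fun i => i = 0)]
      have : (range n).filter (fun i => i = 0) = {0} := by
        ext i; simp only [Finset.mem_filter, Finset.mem_range, Finset.mem_singleton]; omega
      rw [this, Finset.card_singleton]
      have h1 : ¬ (v.val = 0) := by omega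
      simp [h1, hvm]
    · have hset : (starUnion n m).neighborSet v = (∅ : Set (Fin n)) := by
        ext u
        simp only [SimpleGraph.mem_neighborSet, starUnion, SimpleGraph.fromRel_adj,
          Set.mem_setOf_eq, ne_eq, Fin.ext_iff, Set.mem_empty_iff_false, iff_false]
        omega
      rw [hset, Set.ncard_empty]
      have h1 : ¬ (v.val = 0) := by omega
      simp [h1, hvm]

lemma star_sigma2 {n m : ℕ} (h : m + 2 ≤ n) : sigma2 (starUnion n m) = m ^ 2 + m := by
  unfold sigma2
  have h1 : ∀ v : Fin n, ((starUnion n m).neighborSet v).ncard ^ 2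
      = (fun i => (if i = 0 then m else if i ≤ m then 1 else 0) ^ 2) v.val := by
    intro v; rw [star_ncard h]
  rw [Finset.sum_congr rfl fun v _ => h1 v,
    Fin.sum_univ_eq_sum_range (fun i => (if i = 0 then m else if i ≤ m then 1 else 0) ^ 2) n]
  rw [← Finset.sum_subset (Finset.range_subset_range.mpr (by omega : m + 1 ≤ n))
    (by intro i _ hi; simp only [Finset.mem_range, not_lt] at hi
        have h1 : ¬ (i = 0) := by omega
        have h2 : ¬ (i ≤ m) := by omega
        simp [h1, h2])]
  rw [Finset.sum_range_succ']
  have : ∀ i ∈ Finset.range m, (if i + 1 = 0 then m else if i + 1 ≤ m then 1 else 0) ^ 2 = 1 := by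
    intro i hi; simp only [Finset.mem_range] at hi
    have h1 : ¬ (i + 1 = 0) := by omega
    have h2 : i + 1 ≤ m := by omega
    simp [h1, h2]
  rw [Finset.sum_congr rfl this]
  simp [add_comm]





section Struct
variable {V : Type*} [Fintype V] [DecidableEq V] (G : SimpleGraph V) [DecidableRel G.Adj]

lemma star_structure
    (hcov : ∀ u v, G.Adj u v → G.incidenceFinset u ∪ G.incidenceFinset v = G.edgeFinset)
    (hcol : G.Colorable 2) (hne : G.edgeFinset.Nonempty) :
    ∃ c, ∀ e ∈ G.edgeFinset, c ∈ e := by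
  obtain ⟨e, he⟩ := hne
  obtain ⟨a, b, rfl⟩ : ∃ a b, e = s(a, b) := Sym2.ind (fun x y => ⟨x, y, rfl⟩) e
  have hab : G.Adj a b := by rwa [SimpleGraph.mem_edgeFinset, SimpleGraph.mem_edgeSet] at he
  by_cases hA : ∀ e ∈ G.edgeFinset, a ∈ e
  · exact ⟨a, hA⟩
  push_neg at hA
  obtain ⟨e1, he1, ha1⟩ := hA
  refine ⟨b, fun e2 he2 => ?_⟩
  by_contra hb2
  -- e1 contains b
  have hb1 : b ∈ e1 := by
    have := (hcov a b hab) ▸ he1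
    rw [Finset.mem_union, SimpleGraph.mem_incidenceFinset, SimpleGraph.mem_incidenceFinset] at this
    rcases this with h | h
    · exact absurd h.2 ha1
    · exact h.2
  obtain ⟨y, rfl⟩ : ∃ y, e1 = s(b, y) := by
    obtain ⟨x, y, rfl⟩ : ∃ x y, e1 = s(x, y) := Sym2.ind (fun x y => ⟨x, y, rfl⟩) e1
    rw [Sym2.mem_iff] at hb1
    rcases hb1 with rfl | rfl
    · exact ⟨y, rfl⟩
    · exact ⟨x, Sym2.eq_swap⟩
  have hby : G.Adj b y := by rwa [SimpleGraph.mem_edgeFinset, SimpleGraph.mem_edgeSet] at he1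
  have hya : y ≠ a := by rintro rfl; exact ha1 (Sym2.mem_mk_right b y)
  -- e2 contains a
  have ha2 : a ∈ e2 := by
    have := (hcov a b hab) ▸ he2
    rw [Finset.mem_union, SimpleGraph.mem_incidenceFinset, SimpleGraph.mem_incidenceFinset] at this
    rcases this with h | h
    · exact h.2
    · exact absurd h.2 hb2
  obtain ⟨x, rfl⟩ : ∃ x, e2 = s(a, x) := by
    obtain ⟨x, y', rfl⟩ : ∃ x y', e2 = s(x, y') := Sym2.ind (fun x y' => ⟨x, y', rfl⟩) e2
    rw [Sym2.mem_iff] at ha2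
    rcases ha2 with rfl | rfl
    · exact ⟨y', rfl⟩
    · exact ⟨x, Sym2.eq_swap⟩
  have hax : G.Adj a x := by rwa [SimpleGraph.mem_edgeFinset, SimpleGraph.mem_edgeSet] at he2
  have hxb : x ≠ b := by rintro rfl; exact hb2 (Sym2.mem_mk_right _ _)
  -- e2 must meet {b, y}, so x = y
  have hxy : x = y := by
    have := (hcov b y hby) ▸ he2
    rw [Finset.mem_union, SimpleGraph.mem_incidenceFinset, SimpleGraph.mem_incidenceFinset] at this
    rcases this with h | h
    · have hb := h.2
      rw [Sym2.mem_iff] at hb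
      rcases hb with rfl | rfl
      · exact absurd rfl hab.ne'
      · exact absurd rfl hxb
    · have := h.2
      rw [Sym2.mem_iff] at this
      rcases this with rfl | rfl
      · exact absurd rfl hya
      · rfl
  subst hxy
  -- triangle a b x
  obtain ⟨C⟩ := hcol
  have h1 : (C a).val ≠ (C b).val := fun h => C.valid hab (Fin.ext h)
  have h2 : (C b).val ≠ (C x).val := fun h => C.valid hby (Fin.ext h)
  have h3 : (C a).val ≠ (C x).val := fun h => C.valid hax (Fin.ext h)
  have := (C a).isLt; have := (C b).isLt; have := (C x).isLt
  omega
end Struct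





lemma star_iso {n m : ℕ} (hmn : m + 2 ≤ n) (B : SimpleGraph (Fin n)) [DecidableRel B.Adj]
    (c : Fin n) (hdeg : B.degree c = m)
    (hadj : ∀ u v, B.Adj u v ↔
      (u = c ∧ v ∈ B.neighborFinset c) ∨ (v = c ∧ u ∈ B.neighborFinset c)) :
    Nonempty (B ≃g starUnion n m) := by
  set N := B.neighborFinset c with hNdef
  have hNc : c ∉ N := B.notMem_neighborFinset_self c
  have hNcard : N.card = m := by rw [hNdef, B.card_neighborFinset_eq_degree, hdeg]
  set M : Finset (Fin n) := univ.filter (fun v : Fin n => 1 ≤ v.val ∧ v.val ≤ m) with hMdef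
  have hMcard : M.card = m := by
    rw [hMdef, card_val_filter (fun i => 1 ≤ i ∧ i ≤ m)]
    have : (range n).filter (fun i => 1 ≤ i ∧ i ≤ m) = Finset.Ico 1 (m + 1) := by
      ext i; simp only [Finset.mem_filter, Finset.mem_range, Finset.mem_Ico]; omega
    rw [this, Nat.card_Ico]
    omega
  set R : Finset (Fin n) := (insert c N)ᶜ with hRdef
  set R' : Finset (Fin n) := (univ.filter (fun v : Fin n => v.val ≤ m))ᶜ with hR'def
  have hRcard : R.card = n - (m + 1) := by
    rw [hRdef, Finset.card_compl, Finset.card_insert_of_notMem hNc, hNcard, Fintype.card_fin]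
  have hR'card : R'.card = n - (m + 1) := by
    rw [hR'def, Finset.card_compl, Fintype.card_fin, card_val_filter (fun i => i ≤ m)]
    have : (range n).filter (fun i => i ≤ m) = Finset.range (m + 1) := by
      ext i; simp only [Finset.mem_filter, Finset.mem_range]; omega
    rw [this, Finset.card_range]
  have eN : ↥N ≃ ↥M := Finset.equivOfCardEq (by rw [hNcard, hMcard])
  have eR : ↥R ≃ ↥R' := Finset.equivOfCardEq (by rw [hRcard, hR'card])
  have hRmem : ∀ v : Fin n, v ≠ c → v ∉ N → v ∈ R := fun v h1 h2 => by
    rw [hRdef, Finset.mem_compl, Finset.mem_insert]; tauto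
  set z : Fin n := ⟨0, by omega⟩ with hzdef
  set φ : Fin n → Fin n := fun v =>
    if hvc : v = c then z
    else if hv : v ∈ N then (eN ⟨v, hv⟩ : Fin n)
    else (eR ⟨v, hRmem v hvc hv⟩ : Fin n) with hφdef
  have fc : (φ c).val = 0 := by simp [hφdef, hzdef]
  have fN : ∀ v (hv : v ∈ N), 1 ≤ (φ v).val ∧ (φ v).val ≤ m := by
    intro v hv
    have hvc : v ≠ c := fun h => hNc (h ▸ hv)
    have hmem := Finset.mem_filter.mp (eN ⟨v, hv⟩).2
    simpa [hφdef, hvc, hv] using hmem.2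
  have fR : ∀ v (h1 : v ≠ c) (h2 : v ∉ N), m < (φ v).val := by
    intro v h1 h2
    have hmem := Finset.mem_compl.mp (eR ⟨v, hRmem v h1 h2⟩).2
    rw [Finset.mem_filter] at hmem
    push_neg at hmem
    have hm2 := hmem (Finset.mem_univ _)
    simpa [hφdef, h1, h2] using hm2
  -- classify preimages by value ranges
  have g0 : ∀ v, (φ v).val = 0 → v = c := by
    intro v h
    by_cases h1 : v = c
    · exact h1
    by_cases h2 : v ∈ N
    · have := fN v h2; omega
    · have := fR v h1 h2; omega
  have gN : ∀ v, 1 ≤ (φ v).val → (φ v).val ≤ m → v ∈ N := by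
    intro v ha hb
    by_cases h1 : v = c
    · subst h1; omega
    by_cases h2 : v ∈ N
    · exact h2
    · have := fR v h1 h2; omega
  have hinj : Function.Injective φ := by
    intro u v h
    by_cases hu : u = c
    · subst hu
      have : (φ v).val = 0 := by rw [← h, fc]
      exact (g0 v this).symm
    by_cases hv : v = c
    · subst hv
      have : (φ u).val = 0 := by rw [h, fc]
      exact g0 u this
    by_cases hu2 : u ∈ N
    · have hv2 : v ∈ N := by
        have h1 := fN u hu2
        rw [h] at h1
        exact gN v h1.1 h1.2
      have : (eN ⟨u, hu2⟩ : Fin n) = (eN ⟨v, hv2⟩ : Fin n) := by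
        simpa [hφdef, hu, hv, hu2, hv2] using h
      have := eN.injective (Subtype.coe_injective this)
      exact congrArg Subtype.val this
    · have hv2 : v ∉ N := by
        intro hv2
        have h1 := fR u hu hu2
        have h2 := fN v hv2
        omega
      have : (eR ⟨u, hRmem u hu hu2⟩ : Fin n) = (eR ⟨v, hRmem v hv hv2⟩ : Fin n) := by
        simpa [hφdef, hu, hv, hu2, hv2] using h
      have := eR.injective (Subtype.coe_injective this)
      exact congrArg Subtype.val this
  have hbij : Function.Bijective φ := Finite.injective_iff_bijective.mp hinj
  have h0iff : ∀ w, (φ w).val = 0 ↔ w = c :=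
    fun w => ⟨g0 w, fun h => h ▸ fc⟩
  have hNiff : ∀ w, (1 ≤ (φ w).val ∧ (φ w).val ≤ m) ↔ w ∈ N :=
    fun w => ⟨fun h => gN w h.1 h.2, fun h => fN w h⟩
  refine ⟨{ toEquiv := Equiv.ofBijective φ hbij, map_rel_iff' := ?_ }⟩
  intro u v
  show (starUnion n m).Adj (φ u) (φ v) ↔ B.Adj u v
  rw [starUnion, SimpleGraph.fromRel_adj, hadj u v]
  constructor
  · rintro ⟨hne, h | h⟩
    · exact Or.inl ⟨(h0iff u).1 h.1, (hNiff v).1 ⟨h.2.1, h.2.2⟩⟩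
    · exact Or.inr ⟨(h0iff v).1 h.1, (hNiff u).1 ⟨h.2.1, h.2.2⟩⟩
  · rintro (⟨rfl, hv⟩ | ⟨rfl, hu⟩)
    · exact ⟨hinj.ne (fun h => hNc (h ▸ hv)),
        Or.inl ⟨fc, ((hNiff v).2 hv).1, ((hNiff v).2 hv).2⟩⟩
    · exact ⟨hinj.ne (fun h => hNc (h.symm ▸ hu)),
        Or.inr ⟨fc, ((hNiff u).2 hu).1, ((hNiff u).2 hu).2⟩⟩


theorem star_union_unique_max (n m : ℕ) (hn : 2 ≤ n) (hm : m ≤ n - 2)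
    (B : SimpleGraph (Fin n)) (hbip : B.Colorable 2) (hedges : B.edgeSet.ncard = m) :
    sigma2 B ≤ sigma2 (starUnion n m) ∧
      (sigma2 B = sigma2 (starUnion n m) → Nonempty (B ≃g starUnion n m)) := by
  classical
  have hmn : m + 2 ≤ n := by omega
  have hcard : B.edgeFinset.card = m := by
    rw [← hedges, ← SimpleGraph.coe_edgeFinset, Set.ncard_coe_finset]
  have hstar : sigma2 (starUnion n m) = m ^ 2 + m := star_sigma2 hmn
  have hineq : sigma2 B ≤ m ^ 2 + m := by
    have h2 := two_sigma2_le B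
    rw [← sigma2_eq, hcard] at h2
    have h3 : 2 * sigma2 B ≤ 2 * (m ^ 2 + m) := by
      calc 2 * sigma2 B ≤ 2 * m * (m + 1) := h2
        _ = 2 * (m ^ 2 + m) := by ring
    omega
  refine ⟨by rw [hstar]; exact hineq, fun heq => ?_⟩
  by_cases hm0 : m = 0
  · subst hm0
    have hB : B = ⊥ := by
      rw [← SimpleGraph.edgeSet_eq_empty]
      exact (Set.ncard_eq_zero (Set.toFinite _)).mp hedges
    have hstar0 : starUnion n 0 = ⊥ := by
      ext u v
      simp only [starUnion, SimpleGraph.fromRel_adj, SimpleGraph.bot_adj, iff_false, not_and]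
      rintro - (⟨-, h1, h2⟩ | ⟨-, h1, h2⟩) <;> omega
    rw [hB, hstar0]
    exact ⟨SimpleGraph.Iso.refl⟩
  · have hm1 : 1 ≤ m := by omega
    have h2eq : 2 * ∑ v, B.degree v ^ 2 = 2 * B.edgeFinset.card * (B.edgeFinset.card + 1) := by
      rw [← sigma2_eq, heq, hstar, hcard]; ring
    have hcov : ∀ u v, B.Adj u v → B.incidenceFinset u ∪ B.incidenceFinset v = B.edgeFinset :=
      fun u v h => eq_case B h2eq h
    have hne : B.edgeFinset.Nonempty := Finset.card_pos.mp (by omega)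
    obtain ⟨c, hc⟩ := star_structure B hcov hbip hne
    have hadj : ∀ u v, B.Adj u v ↔
        (u = c ∧ v ∈ B.neighborFinset c) ∨ (v = c ∧ u ∈ B.neighborFinset c) := by
      intro u v
      constructor
      · intro h
        have hcm : c ∈ s(u, v) :=
          hc _ (by rwa [SimpleGraph.mem_edgeFinset, SimpleGraph.mem_edgeSet])
        rw [Sym2.mem_iff] at hcm
        rcases hcm with rfl | rfl
        · exact Or.inl ⟨rfl, (SimpleGraph.mem_neighborFinset _ _ _).mpr h⟩
        · exact Or.inr ⟨rfl, (SimpleGraph.mem_neighborFinset _ _ _).mpr h.symm⟩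
      · rintro (⟨rfl, h⟩ | ⟨rfl, h⟩)
        · exact (SimpleGraph.mem_neighborFinset _ _ _).mp h
        · exact ((SimpleGraph.mem_neighborFinset _ _ _).mp h).symm
    have hdeg : B.degree c = m := by
      have hIc : B.incidenceFinset c = B.edgeFinset := by
        apply Finset.Subset.antisymm
        · intro e he
          rw [SimpleGraph.mem_incidenceFinset] at he
          exact SimpleGraph.mem_edgeFinset.mpr he.1
        · intro e he
          rw [SimpleGraph.mem_incidenceFinset]
          exact ⟨SimpleGraph.mem_edgeFinset.mp he, hc e he⟩
      rw [← SimpleGraph.card_incidenceFinset_eq_degree, hIc, hcard]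
    exact star_iso hmn B c hdeg hadj
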